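/- arXiv:1904.07584 — 3 statements merged into one kernel-verified Lean document; each statement's English description precedes it below -/
import Mathlib

section
/- Let d ≥ 1, and suppose vectors a(d+1),…,a(n) ∈ ℚ^d each lie in the open positive orthant (all coordinates > 0). Fix y' = (y_{d+1},…,y_{n-1}) ∈ ℂ^{n-d-1}, β ∈ ℂ^d with Re(β_k) < 0 for all k, m ∈ ℕ, and a(n) with all coordinates positive. Then the function t ↦ |t^{-β-𝟙+m·a(n)}| · |exp(t_1+⋯+t_d + ∑_{j=d+1}^{n-1} y_j t^{a(j)})|, restricted to the product of half-lines arg t_k = (1+δ_k+2p_k)π (with |δ_k|<1/2) and parametrized by |t_k| = ρ_k ∈ (0,∞), is dominated by a function of the form Const · ρ^{-Re β + m a(n) - 𝟙} exp(C - c(ρ_1+⋯+ρ_d)) for some constants C, c > 0, and hence is integrable over (0,∞)^d. -/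
open MeasureTheory Real Set Filter


open MeasureTheory

lemma aux_rpow_affine {s M x : ℝ} (hs0 : 0 ≤ s) (hs1 : s ≤ 1) (hM : 0 < M) (hx : 0 ≤ x) :
    x ^ s ≤ M ^ s + M ^ (s - 1) * x := by
  rcases le_total x M with h | h
  · have : x ^ s ≤ M ^ s := Real.rpow_le_rpow hx h hs0
    nlinarith [Real.rpow_nonneg hM.le (s - 1), Real.rpow_nonneg hM.le s]
  · have hx0 : 0 < x := lt_of_lt_of_le hM h
    have h1 : x ^ s = x ^ (s - 1) * x := by
      rw [← Real.rpow_add_one hx0.ne' (s - 1)]; ring_nf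
    have h2 : x ^ (s - 1) ≤ M ^ (s - 1) :=
      Real.rpow_le_rpow_of_nonpos hM h (by linarith)
    have := mul_le_mul_of_nonneg_right h2 hx
    nlinarith [Real.rpow_nonneg hM.le s]

lemma aux_integrable_abs {e c : ℝ} (he : -1 < e) (hc : 0 < c) :
    Integrable (fun x : ℝ => |x| ^ e * Real.exp (-c * |x|)) := by
  have base : IntegrableOn (fun x : ℝ => x ^ e * Real.exp (-c * x)) (Ioi 0) := by
    have := integrableOn_rpow_mul_exp_neg_mul_rpow (p := 1) he zero_lt_one hc
    simpa [Real.rpow_one] using this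
  have pos : IntegrableOn (fun x : ℝ => |x| ^ e * Real.exp (-c * |x|)) (Ioi 0) :=
    base.congr_fun (fun x hx => by rw [abs_of_pos hx]) measurableSet_Ioi
  rw [← integrableOn_univ, ← @Iio_union_Ici _ _ (0 : ℝ), integrableOn_union,
    integrableOn_Ici_iff_integrableOn_Ioi]
  refine ⟨?_, pos⟩
  rw [← (Measure.measurePreserving_neg (volume : Measure ℝ)).integrableOn_comp_preimage
      (Homeomorph.neg ℝ).measurableEmbedding]
  simpa [Function.comp_def, abs_neg, neg_preimage, neg_Iio, neg_zero] using pos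

/-- The absolute value of the integrand of the coefficient `A_{p,δ}(β;m,y')`, along the
product of half-lines `arg t_k = (1+δ_k+2p_k)π` parametrized by `ρ ∈ (0,∞)^d`. -/
noncomputable def gevreyCoeffIntegrand (d n : ℕ) (a : ℕ → Fin d → ℚ) (y : ℕ → ℂ)
    (β : Fin d → ℂ) (m : ℕ) (p : Fin d → ℤ) (δ : Fin d → ℝ) (ρ : Fin d → ℝ) : ℝ :=
  ‖Complex.exp (∑ k, (-β k - 1 + (m : ℂ) * (a n k : ℂ)) *
      ((Real.log (ρ k) : ℂ) + (Real.pi : ℂ) * (1 + (δ k : ℂ) + 2 * (p k : ℂ)) * Complex.I))‖ *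
  ‖Complex.exp ((∑ k, Complex.exp ((Real.log (ρ k) : ℂ) +
        (Real.pi : ℂ) * (1 + (δ k : ℂ) + 2 * (p k : ℂ)) * Complex.I)) +
      ∑ j ∈ Finset.Icc (d + 1) (n - 1), y j *
        Complex.exp (∑ k, (a j k : ℂ) *
          ((Real.log (ρ k) : ℂ) + (Real.pi : ℂ) * (1 + (δ k : ℂ) + 2 * (p k : ℂ)) * Complex.I)))‖

lemma gevrey_eq (d n : ℕ) (a : ℕ → Fin d → ℚ) (y : ℕ → ℂ) (β : Fin d → ℂ) (m : ℕ)
    (p : Fin d → ℤ) (δ : Fin d → ℝ) (ρ : Fin d → ℝ) (hρ : ∀ k, 0 < ρ k) :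
    gevreyCoeffIntegrand d n a y β m p δ ρ =
      (∏ k, ρ k ^ (-(β k).re + (m : ℝ) * (a n k : ℝ) - 1)) *
        Real.exp (∑ k, (β k).im * (Real.pi * (1 + δ k + 2 * (p k : ℝ)))) *
        Real.exp ((∑ k, ρ k * Real.cos (Real.pi * (1 + δ k + 2 * (p k : ℝ)))) +
          (∑ j ∈ Finset.Icc (d + 1) (n - 1), y j *
            Complex.exp (∑ k, (a j k : ℂ) *
              ((Real.log (ρ k) : ℂ) +
                (Real.pi : ℂ) * (1 + (δ k : ℂ) + 2 * (p k : ℂ)) * Complex.I))).re) := by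
  have hz : ∀ k, (Real.log (ρ k) : ℂ) + (Real.pi : ℂ) * (1 + (δ k : ℂ) + 2 * (p k : ℂ)) * Complex.I
      = Complex.ofReal (Real.log (ρ k)) +
        Complex.ofReal (Real.pi * (1 + δ k + 2 * (p k : ℝ))) * Complex.I := by
    intro k; push_cast; ring
  unfold gevreyCoeffIntegrand
  simp only [hz, Complex.norm_exp, Complex.add_re, Complex.re_sum,
    Complex.mul_re, Complex.add_im, Complex.mul_im, Complex.ofReal_re, Complex.ofReal_im,
    Complex.I_re, Complex.I_im, Complex.sub_re, Complex.sub_im, Complex.neg_re, Complex.neg_im,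
    Complex.one_re, Complex.one_im, Complex.natCast_re, Complex.natCast_im,
    Complex.ratCast_re, Complex.ratCast_im, Complex.exp_re, Complex.exp_im,
    Real.exp_log (hρ _)]
  simp only [mul_zero, zero_mul, mul_one, sub_zero, add_zero, zero_add, neg_zero,
    Real.exp_log (hρ _)]
  have hprod : (∏ k, ρ k ^ (-(β k).re + (m : ℝ) * (a n k : ℝ) - 1)) =
      rexp (∑ k, (-(β k).re + (m : ℝ) * (a n k : ℝ) - 1) * Real.log (ρ k)) := by
    rw [Real.exp_sum]
    exact Finset.prod_congr rfl fun k _ => by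
      rw [Real.rpow_def_of_pos (hρ k), mul_comm]
  rw [hprod, ← Real.exp_add, ← Real.exp_add, ← Real.exp_add, Real.exp_eq_exp]
  have h1 : (∑ x, ((-(β x).re - 1 + (m : ℝ) * (a n x : ℝ)) * Real.log (ρ x) -
      -(β x).im * (π * (1 + δ x + 2 * (p x : ℝ))))) =
      (∑ k, (-(β k).re + (m : ℝ) * (a n k : ℝ) - 1) * Real.log (ρ k)) +
        ∑ k, (β k).im * (π * (1 + δ k + 2 * (p k : ℝ))) := by
    rw [← Finset.sum_add_distrib]
    exact Finset.sum_congr rfl fun k _ => by ring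
  rw [h1]


lemma aux_cos (x : ℝ) (q : ℤ) : Real.cos (π * (1 + x + 2 * q)) = -Real.cos (π * x) := by
  have : π * (1 + x + 2 * q) = (π - (- (π * x))) + q * (2 * π) := by ring
  rw [this, Real.cos_add_int_mul_two_pi, Real.cos_pi_sub, Real.cos_neg]

/-- Under Assumption (4.4)(1) (the columns `a(d+1),…,a(n-1)` lie in the open positive orthant
with coordinate sum `< 1`, and `a(n)` has positive coordinates), for `Re β < 0` the integrand of
`A_{p,δ}(β;m,y')` is dominated on the half-line cycle by
`Const · ρ^{-Re β + m a(n) - 𝟙} exp(C - c(ρ_1+⋯+ρ_d))` and hence is integrable on `(0,∞)^d`. -/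
theorem gevrey_coeff_integrand_dominated (d n : ℕ) (hd : 1 ≤ d) (hdn : d + 1 ≤ n)
    (a : ℕ → Fin d → ℚ)
    (hpos : ∀ j, d + 1 ≤ j → j ≤ n → ∀ k, 0 < a j k)
    (hsum : ∀ j, d + 1 ≤ j → j ≤ n - 1 → (∑ k, a j k) < 1)
    (y : ℕ → ℂ) (β : Fin d → ℂ) (hβ : ∀ k, (β k).re < 0) (m : ℕ)
    (p : Fin d → ℤ) (δ : Fin d → ℝ) (hδ : ∀ k, |δ k| < 1 / 2) :
    (∃ K C c : ℝ, 0 < c ∧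
      ∀ ρ : Fin d → ℝ, (∀ k, 0 < ρ k) →
        gevreyCoeffIntegrand d n a y β m p δ ρ ≤
          K * (∏ k, ρ k ^ (-(β k).re + (m : ℝ) * (a n k : ℝ) - 1)) *
            Real.exp (C - c * ∑ k, ρ k)) ∧
    IntegrableOn (gevreyCoeffIntegrand d n a y β m p δ)
      {ρ : Fin d → ℝ | ∀ k, 0 < ρ k} volume := by
  have hFd : Nonempty (Fin d) := ⟨⟨0, hd⟩⟩
  have hcos : ∀ k, 0 < Real.cos (π * δ k) := by
    intro k
    apply Real.cos_pos_of_mem_Ioo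
    obtain ⟨h1, h2⟩ := abs_lt.mp (hδ k)
    have := Real.pi_pos
    constructor <;> [nlinarith; nlinarith]
  set c0 : ℝ := Finset.univ.inf' Finset.univ_nonempty (fun k => Real.cos (π * δ k)) with hc0def
  have hc0 : 0 < c0 := (Finset.lt_inf'_iff _).mpr fun k _ => hcos k
  have hc0le : ∀ k, c0 ≤ Real.cos (π * δ k) := fun k => Finset.inf'_le _ (Finset.mem_univ k)
  have hsJ : ∀ j ∈ Finset.Icc (d + 1) (n - 1),
      0 ≤ ((∑ k, a j k : ℚ) : ℝ) ∧ ((∑ k, a j k : ℚ) : ℝ) < 1 := by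
    intro j hj
    obtain ⟨hj1, hj2⟩ := Finset.mem_Icc.mp hj
    have hjn : j ≤ n := le_trans hj2 (Nat.sub_le n 1)
    constructor
    · exact_mod_cast Finset.sum_nonneg fun k _ => (hpos j hj1 hjn k).le
    · exact_mod_cast hsum j hj1 hj2
  -- choice of M
  have htend : Tendsto (fun M : ℝ => ∑ j ∈ Finset.Icc (d + 1) (n - 1),
      ‖y j‖ * M ^ (((∑ k, a j k : ℚ) : ℝ) - 1)) atTop (nhds 0) := by
    rw [show (0 : ℝ) = ∑ j ∈ Finset.Icc (d + 1) (n - 1), (0 : ℝ) by simp]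
    refine tendsto_finset_sum _ fun j hj => ?_
    rw [show (0 : ℝ) = ‖y j‖ * 0 by ring]
    refine Filter.Tendsto.const_mul _ ?_
    have h1 : (0 : ℝ) < 1 - ((∑ k, a j k : ℚ) : ℝ) := by linarith [(hsJ j hj).2]
    have := tendsto_rpow_neg_atTop h1
    simpa [neg_sub] using this
  obtain ⟨M, hM1, hMle⟩ : ∃ M : ℝ, 1 ≤ M ∧ ∑ j ∈ Finset.Icc (d + 1) (n - 1),
      ‖y j‖ * M ^ (((∑ k, a j k : ℚ) : ℝ) - 1) ≤ c0 / 2 := by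
    have h1 := htend.eventually_lt_const (by positivity : (0:ℝ) < c0 / 2)
    have h2 : ∀ᶠ M : ℝ in atTop, 1 ≤ M := eventually_ge_atTop 1
    obtain ⟨M, hM2, hM1⟩ := (h2.and h1).exists
    exact ⟨M, hM2, hM1.le⟩
  have hM0 : 0 < M := lt_of_lt_of_le one_pos hM1
  set C : ℝ := ∑ j ∈ Finset.Icc (d + 1) (n - 1), ‖y j‖ * M ^ ((∑ k, a j k : ℚ) : ℝ) with hCdef
  set K : ℝ := rexp (∑ k, (β k).im * (π * (1 + δ k + 2 * (p k : ℝ)))) with hKdef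
  -- key pointwise bound
  have key : ∀ ρ : Fin d → ℝ, (∀ k, 0 < ρ k) →
      gevreyCoeffIntegrand d n a y β m p δ ρ ≤
        K * (∏ k, ρ k ^ (-(β k).re + (m : ℝ) * (a n k : ℝ) - 1)) *
          Real.exp (C - c0 / 2 * ∑ k, ρ k) := by
    intro ρ hρ
    rw [gevrey_eq d n a y β m p δ ρ hρ]
    have hS : 0 < ∑ k, ρ k := Finset.sum_pos (fun k _ => hρ k) Finset.univ_nonempty
    -- bound the exponent of the third factor
    have h1 : (∑ k, ρ k * Real.cos (π * (1 + δ k + 2 * (p k : ℝ)))) ≤ -(c0 * ∑ k, ρ k) := by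
      have : ∀ k ∈ Finset.univ, ρ k * Real.cos (π * (1 + δ k + 2 * (p k : ℝ))) ≤ -(c0 * ρ k) := by
        intro k _
        rw [aux_cos (δ k) (p k)]
        have := mul_le_mul_of_nonneg_left (hc0le k) (hρ k).le
        nlinarith
      calc (∑ k, ρ k * Real.cos (π * (1 + δ k + 2 * (p k : ℝ))))
          ≤ ∑ k, -(c0 * ρ k) := Finset.sum_le_sum this
        _ = -(c0 * ∑ k, ρ k) := by simp [Finset.mul_sum]
    have h2 : (∑ j ∈ Finset.Icc (d + 1) (n - 1), y j *
          Complex.exp (∑ k, (a j k : ℂ) *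
            ((Real.log (ρ k) : ℂ) +
              (Real.pi : ℂ) * (1 + (δ k : ℂ) + 2 * (p k : ℂ)) * Complex.I))).re ≤
        ∑ j ∈ Finset.Icc (d + 1) (n - 1), ‖y j‖ *
          (M ^ ((∑ k, a j k : ℚ) : ℝ) + M ^ (((∑ k, a j k : ℚ) : ℝ) - 1) * ∑ k, ρ k) := by
      refine le_trans (Complex.re_le_norm _) ?_
      refine le_trans (norm_sum_le _ _) ?_
      refine Finset.sum_le_sum fun j hj => ?_
      rw [norm_mul]
      refine mul_le_mul_of_nonneg_left ?_ (norm_nonneg _)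
      -- ‖exp w‖ = rexp (w.re) with w.re = ∑ a log ρ
      have hwre : (∑ k, (a j k : ℂ) *
          ((Real.log (ρ k) : ℂ) +
            (Real.pi : ℂ) * (1 + (δ k : ℂ) + 2 * (p k : ℂ)) * Complex.I)).re =
          ∑ k, ((a j k : ℝ)) * Real.log (ρ k) := by
        rw [Complex.re_sum]
        refine Finset.sum_congr rfl fun k _ => ?_
        simp [Complex.mul_re, Complex.add_re, Complex.add_im, Complex.mul_im]
      rw [Complex.norm_exp, hwre]
      have hlog : (∑ k, ((a j k : ℝ)) * Real.log (ρ k)) ≤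
          ((∑ k, a j k : ℚ) : ℝ) * Real.log (∑ k, ρ k) := by
        have hcast : ((∑ k, a j k : ℚ) : ℝ) = ∑ k, ((a j k : ℝ)) := by push_cast; rfl
        rw [hcast, Finset.sum_mul]
        refine Finset.sum_le_sum fun k _ => ?_
        obtain ⟨hj1, hj2⟩ := Finset.mem_Icc.mp hj
        have ha : (0:ℝ) ≤ (a j k : ℝ) := by
          exact_mod_cast (hpos j hj1 (le_trans hj2 (Nat.sub_le n 1)) k).le
        refine mul_le_mul_of_nonneg_left ?_ ha
        exact Real.log_le_log (hρ k)
          (Finset.single_le_sum (fun i _ => (hρ i).le) (Finset.mem_univ k))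
      refine le_trans (Real.exp_le_exp.mpr hlog) ?_
      have hrw : rexp (((∑ k, a j k : ℚ) : ℝ) * Real.log (∑ k, ρ k)) =
          (∑ k, ρ k) ^ ((∑ k, a j k : ℚ) : ℝ) := by
        rw [Real.rpow_def_of_pos hS, mul_comm]
      rw [hrw]
      exact aux_rpow_affine (hsJ j hj).1 (hsJ j hj).2.le hM0 hS.le
    -- combine exponent bound
    have hE : (∑ k, ρ k * Real.cos (π * (1 + δ k + 2 * (p k : ℝ)))) +
        (∑ j ∈ Finset.Icc (d + 1) (n - 1), y j *
          Complex.exp (∑ k, (a j k : ℂ) *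
            ((Real.log (ρ k) : ℂ) +
              (Real.pi : ℂ) * (1 + (δ k : ℂ) + 2 * (p k : ℂ)) * Complex.I))).re ≤
        C - c0 / 2 * ∑ k, ρ k := by
      have hsplit : ∑ j ∈ Finset.Icc (d + 1) (n - 1), ‖y j‖ *
          (M ^ ((∑ k, a j k : ℚ) : ℝ) + M ^ (((∑ k, a j k : ℚ) : ℝ) - 1) * ∑ k, ρ k) =
          C + (∑ j ∈ Finset.Icc (d + 1) (n - 1),
            ‖y j‖ * M ^ (((∑ k, a j k : ℚ) : ℝ) - 1)) * ∑ k, ρ k := by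
        rw [hCdef, Finset.sum_mul, ← Finset.sum_add_distrib]
        exact Finset.sum_congr rfl fun j _ => by ring
      have hlast := mul_le_mul_of_nonneg_right hMle hS.le
      have h2' := h2.trans (le_of_eq hsplit)
      linarith [h1, h2', hlast]
    -- final multiplication
    have hprodnn : 0 ≤ ∏ k, ρ k ^ (-(β k).re + (m : ℝ) * (a n k : ℝ) - 1) :=
      Finset.prod_nonneg fun k _ => Real.rpow_nonneg (hρ k).le _
    rw [hKdef]
    refine le_trans (mul_le_mul_of_nonneg_left (Real.exp_le_exp.mpr hE)
      (mul_nonneg hprodnn (Real.exp_pos _).le)) (le_of_eq (by ring))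
  refine ⟨⟨K, C, c0 / 2, by positivity, key⟩, ?_⟩
  -- integrability
  have he : ∀ k, (-1 : ℝ) < -(β k).re + (m : ℝ) * (a n k : ℝ) - 1 := by
    intro k
    have h1 : 0 < -(β k).re := by linarith [hβ k]
    have h2 : (0:ℝ) ≤ (m:ℝ) * (a n k : ℝ) :=
      mul_nonneg (Nat.cast_nonneg m) (by exact_mod_cast (hpos n (by omega) le_rfl k).le)
    linarith
  have hg : Integrable (fun ρ : Fin d → ℝ =>
      ∏ k, (|ρ k| ^ (-(β k).re + (m : ℝ) * (a n k : ℝ) - 1) * rexp (-(c0 / 2) * |ρ k|))) :=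
    Integrable.fintype_prod (fun k => aux_integrable_abs (he k) (by positivity))
  have hG : Integrable (fun ρ : Fin d → ℝ => (K * rexp C) *
      ∏ k, (|ρ k| ^ (-(β k).re + (m : ℝ) * (a n k : ℝ) - 1) * rexp (-(c0 / 2) * |ρ k|))) :=
    hg.const_mul _
  have hSmeas : MeasurableSet {ρ : Fin d → ℝ | ∀ k, 0 < ρ k} := by
    have : {ρ : Fin d → ℝ | ∀ k, 0 < ρ k} = Set.univ.pi (fun _ => Ioi (0:ℝ)) := by
      ext x; simp [Set.mem_pi]
    rw [this]
    exact MeasurableSet.univ_pi fun _ => measurableSet_Ioi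
  have hfm : Measurable (gevreyCoeffIntegrand d n a y β m p δ) := by
    unfold gevreyCoeffIntegrand
    have hz : ∀ (k : Fin d), Measurable fun ρ : Fin d → ℝ =>
        (Real.log (ρ k) : ℂ) + (Real.pi : ℂ) * (1 + (δ k : ℂ) + 2 * (p k : ℂ)) * Complex.I :=
      fun k => (Complex.measurable_ofReal.comp
        (Real.measurable_log.comp (measurable_pi_apply k))).add_const _
    refine Measurable.mul (Measurable.norm ?_) (Measurable.norm ?_)
    · exact Complex.continuous_exp.measurable.comp
        (Finset.measurable_sum _ fun k _ => (hz k).const_mul _)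
    · refine Complex.continuous_exp.measurable.comp (Measurable.add ?_ ?_)
      · exact Finset.measurable_sum _ fun k _ =>
          Complex.continuous_exp.measurable.comp (hz k)
      · exact Finset.measurable_sum _ fun j _ =>
          (Complex.continuous_exp.measurable.comp
            (Finset.measurable_sum _ fun k _ => (hz k).const_mul _)).const_mul _
  refine Integrable.mono' (hG.integrableOn) hfm.aestronglyMeasurable.restrict ?_
  rw [ae_restrict_iff' hSmeas]
  refine Filter.Eventually.of_forall fun ρ hρ => ?_
  have hρ' : ∀ k, 0 < ρ k := hρ
  have hnn : 0 ≤ gevreyCoeffIntegrand d n a y β m p δ ρ := by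
    unfold gevreyCoeffIntegrand; positivity
  rw [Real.norm_eq_abs, abs_of_nonneg hnn]
  refine (key ρ hρ').trans (le_of_eq ?_)
  have h1 : C - c0 / 2 * ∑ k, ρ k = C + ∑ k, -(c0 / 2) * ρ k := by
    rw [Finset.mul_sum]
    rw [show (∑ k, -(c0 / 2) * ρ k) = -∑ k, c0 / 2 * ρ k by
      rw [← Finset.sum_neg_distrib]; exact Finset.sum_congr rfl fun k _ => by ring]
    ring
  have h2 : (∏ k, (|ρ k| ^ (-(β k).re + (m : ℝ) * (a n k : ℝ) - 1) * rexp (-(c0 / 2) * |ρ k|)))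
      = (∏ k, ρ k ^ (-(β k).re + (m : ℝ) * (a n k : ℝ) - 1)) * ∏ k, rexp (-(c0 / 2) * ρ k) := by
    rw [← Finset.prod_mul_distrib]
    exact Finset.prod_congr rfl fun k _ => by rw [abs_of_pos (hρ' k)]
  rw [h2, h1, Real.exp_add, Real.exp_sum, Real.exp_sum]
  ac_rfl
end

section
/- Let a ∈ ℚ^d_{>0} with |a| = a_1+⋯+a_d > 1 and fix y_n ∈ ℂ*. For any p ∈ ℤ^d there exists δ ∈ ℝ^d with |δ_k| < 1/2 for all k such that arg(y_n) + ⟨𝟙 + δ + 2p, a⟩π ∈ (π/2, 3π/2) + 2πℤ. -/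
/-- Existence of an admissible `δ` (Lemma 4.5): if `a ∈ ℚ^d_{>0}` has `|a| > 1`, then for
any determination `α` of `arg y_n` and any `p ∈ ℤ^d` there is `δ` with `|δ_k| < 1/2` such
that `α + ⟨𝟙+δ+2p, a⟩π ∈ (π/2, 3π/2) + 2πℤ`. -/
theorem exists_admissible_delta (d : ℕ) (a : Fin d → ℚ) (hapos : ∀ k, 0 < a k)
    (hsum : 1 < ∑ k, a k) (α : ℝ) (p : Fin d → ℤ) :
    ∃ δ : Fin d → ℝ, (∀ k, |δ k| < 1 / 2) ∧
      ∃ L : ℤ, α + (∑ k, (1 + δ k + 2 * (p k : ℝ)) * (a k : ℝ)) * Real.pi ∈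
        Set.Ioo (Real.pi / 2 + 2 * Real.pi * L) (3 * Real.pi / 2 + 2 * Real.pi * L) := by
  set S : ℝ := ∑ k, (a k : ℝ) with hS
  have hS1 : 1 < S := by
    have : ((1 : ℚ) : ℝ) < ((∑ k, a k : ℚ) : ℝ) := by exact_mod_cast hsum
    simpa [hS] using this
  have hS0 : 0 < S := lt_trans one_pos hS1
  have hπ : 0 < Real.pi := Real.pi_pos
  set P : ℝ := ∑ k, (p k : ℝ) * (a k : ℝ) with hP
  set c : ℝ := α + S * Real.pi + 2 * Real.pi * P with hc
  set L : ℤ := round ((c - Real.pi) / (2 * Real.pi)) with hL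
  set m : ℝ := Real.pi + 2 * Real.pi * L with hm
  have hcm : |c - m| ≤ Real.pi := by
    have h := abs_sub_round ((c - Real.pi) / (2 * Real.pi))
    have h2 : (0:ℝ) < 2 * Real.pi := by linarith
    have heq : (c - Real.pi) / (2 * Real.pi) - (L : ℝ) = (c - m) / (2 * Real.pi) := by
      rw [hm]; field_simp; ring
    rw [heq, abs_div, abs_of_pos h2, div_le_iff₀ h2] at h
    linarith
  have hcm1 := abs_le.mp hcm
  set lo : ℝ := max (m - Real.pi/2) (c - S*Real.pi/2) with hlo
  set hi : ℝ := min (m + Real.pi/2) (c + S*Real.pi/2) with hhi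
  have hlohi : lo < hi := by
    rw [hlo, hhi]
    simp only [max_lt_iff, lt_min_iff]
    refine ⟨⟨by linarith, ?_⟩, ⟨?_, by nlinarith⟩⟩
    · nlinarith [hcm1.1, hcm1.2]
    · nlinarith [hcm1.1, hcm1.2]
  set x : ℝ := (lo + hi) / 2 with hx
  have hxlo : lo < x := by rw [hx]; linarith
  have hxhi : x < hi := by rw [hx]; linarith
  have hxm1 : m - Real.pi/2 < x := lt_of_le_of_lt (le_max_left _ _) hxlo
  have hxm2 : x < m + Real.pi/2 := lt_of_lt_of_le hxhi (min_le_left _ _)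
  have hxc1 : c - S*Real.pi/2 < x := lt_of_le_of_lt (le_max_right _ _) hxlo
  have hxc2 : x < c + S*Real.pi/2 := lt_of_lt_of_le hxhi (min_le_right _ _)
  set t : ℝ := (x - α - 2*Real.pi*P)/(S*Real.pi) - 1 with ht
  have hSπ : (0:ℝ) < S * Real.pi := mul_pos hS0 hπ
  have hSπ' : S * Real.pi ≠ 0 := ne_of_gt hSπ
  have hq1 : S*Real.pi/2 < x - α - 2*Real.pi*P := by rw [hc] at hxc1; linarith
  have hq2 : x - α - 2*Real.pi*P < 3*(S*Real.pi)/2 := by rw [hc] at hxc2; linarith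
  have hu1 : (1:ℝ)/2 < (x - α - 2*Real.pi*P)/(S*Real.pi) := by
    rw [lt_div_iff₀ hSπ]; linarith
  have hu2 : (x - α - 2*Real.pi*P)/(S*Real.pi) < 3/2 := by
    rw [div_lt_iff₀ hSπ]; linarith
  have htb : -(1/2 : ℝ) < t ∧ t < 1/2 := by
    constructor <;> rw [ht] <;> linarith
  have hsumval : ∑ k, (1 + t + 2*(p k : ℝ)) * (a k : ℝ) = (1+t)*S + 2*P := by
    rw [hS, hP, Finset.mul_sum, Finset.mul_sum, ← Finset.sum_add_distrib]
    exact Finset.sum_congr rfl fun k _ => by ring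
  have hval : α + ((1+t)*S + 2*P) * Real.pi = x := by
    have h0 : 1 + t = (x - α - 2*Real.pi*P)/(S*Real.pi) := by rw [ht]; ring
    have h1 : (1+t)*(S*Real.pi) = x - α - 2*Real.pi*P := by
      rw [h0, div_mul_cancel₀ _ hSπ']
    have h2 : ((1+t)*S + 2*P)*Real.pi = (1+t)*(S*Real.pi) + 2*Real.pi*P := by ring
    rw [h2, h1]; ring
  refine ⟨fun _ => t, fun k => abs_lt.mpr ⟨by linarith [htb.1], htb.2⟩, L, ?_⟩
  rw [hsumval, hval]
  constructor
  · rw [hm] at hxm1; linarith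
  · rw [hm] at hxm2; linarith
end

section
/- Let h : U → ℂ and Σ ⊂ U with the property: there exists δ ∈ (0, π/2) such that for all R > 0 there is a compact K ⊂ U with Re h(t) < -R and arg h(t) ∈ (π - δ, π + δ) for all t ∈ Σ \ K. Let P be a point of a normal crossing compactifying divisor adherent to Σ, with local coordinates v in which h(v) = w(v)/(v_1^{m_1}⋯v_k^{m_k}), m_i > 0, and |w(v)| ≥ R' > 0 near P. Then for v near P on Σ, |exp(h(v))| ≤ exp(-R' cos(δ) / (|v_1|^{m_1}⋯|v_k|^{m_k})); in particular exp(h) is flat at P: for every N ∈ ℕ^k there is C_N with |exp(h(v))| ≤ C_N |v_1|^{N_1}⋯|v_k|^{N_k}. -/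
/-- The core estimate of Lemma 5.1: near a point of the normal crossing divisor where
`h(v) = w(v)/(v_1^{m_1}⋯v_k^{m_k})` with `m_i > 0` and `|w(v)| ≥ R' > 0`, the controlled
argument condition `arg h(v) ∈ (π-δ, π+δ)` (i.e. `|arg(-h(v))| < δ`) gives
`|exp(h(v))| ≤ exp(-R' cos δ / (|v_1|^{m_1}⋯|v_k|^{m_k}))`; in particular `exp(h)` is flat
along the divisor. -/
theorem rapid_decay_flatness (d k : ℕ) (hk : k ≤ d)
    (S : Set (Fin d → ℂ)) (h w : (Fin d → ℂ) → ℂ)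
    (m : Fin d → ℕ) (hm : ∀ i : Fin d, (i : ℕ) < k → 0 < m i)
    (R' δ : ℝ) (hR' : 0 < R') (hδ : δ ∈ Set.Ioo 0 (Real.pi / 2))
    (hform : ∀ v ∈ S, (∀ i : Fin d, (i : ℕ) < k → v i ≠ 0) ∧
      h v = w v / ∏ i ∈ Finset.univ.filter (fun i : Fin d => (i : ℕ) < k), v i ^ m i)
    (hw : ∀ v ∈ S, R' ≤ ‖w v‖)
    (harg : ∀ v ∈ S, |Complex.arg (-(h v))| < δ) :
    (∀ v ∈ S, ‖Complex.exp (h v)‖ ≤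
      Real.exp (-(R' * Real.cos δ) /
        ∏ i ∈ Finset.univ.filter (fun i : Fin d => (i : ℕ) < k), ‖v i‖ ^ m i)) ∧
    (∀ N : Fin d → ℕ, ∃ C : ℝ, 0 < C ∧ ∀ v ∈ S, (∀ i, ‖v i‖ ≤ 1) →
      ‖Complex.exp (h v)‖ ≤
        C * ∏ i ∈ Finset.univ.filter (fun i : Fin d => (i : ℕ) < k),
          ‖v i‖ ^ N i) := by
  set F := Finset.univ.filter (fun i : Fin d => (i : ℕ) < k) with hF
  set c : ℝ := R' * Real.cos δ with hc
  have hcosδ : 0 < Real.cos δ := Real.cos_pos_of_mem_Ioo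
    ⟨lt_trans (by linarith [Real.pi_pos, hδ.1] : -(Real.pi/2) < 0) hδ.1, hδ.2⟩
  have hcpos : 0 < c := mul_pos hR' hcosδ
  have hPpos : ∀ v ∈ S, 0 < ∏ i ∈ F, ‖v i‖ ^ m i := by
    intro v hv
    refine Finset.prod_pos fun i hi => pow_pos ?_ _
    have := (hform v hv).1 i (by simpa [hF] using hi)
    exact norm_pos_iff.mpr this
  have main : ∀ v ∈ S, ‖Complex.exp (h v)‖ ≤
      Real.exp (-c / ∏ i ∈ F, ‖v i‖ ^ m i) := by
    intro v hv
    obtain ⟨hne, hfv⟩ := hform v hv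
    set P := ∏ i ∈ F, ‖v i‖ ^ m i with hP
    have hPp : 0 < P := hPpos v hv
    have habsprod : ‖∏ i ∈ F, v i ^ m i‖ = P := by
      simp [hP]
    have habsh : ‖h v‖ = ‖w v‖ / P := by
      rw [hfv, norm_div, habsprod]
    have hlb : R' / P ≤ ‖h v‖ := by
      rw [habsh]
      exact (div_le_div_iff_of_pos_right hPp).mpr (hw v hv)
    have hh0 : h v ≠ 0 := by
      intro h0
      rw [h0, norm_zero] at hlb
      exact absurd hlb (not_le.mpr (div_pos hR' hPp))
    have hnh0 : -(h v) ≠ 0 := neg_ne_zero.mpr hh0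
    have hcos : Real.cos δ ≤ Real.cos (Complex.arg (-(h v))) := by
      rw [← Real.cos_abs (Complex.arg (-(h v)))]
      exact Real.cos_le_cos_of_nonneg_of_le_pi (abs_nonneg _)
        (le_trans hδ.2.le (by linarith [Real.pi_pos])) (harg v hv).le
    have hre : (-(h v)).re = ‖h v‖ * Real.cos (Complex.arg (-(h v))) := by
      conv_lhs => rw [← Complex.norm_mul_cos_arg (-(h v))]
      rw [norm_neg]
    have hre_bound : c / P ≤ (-(h v)).re := by
      rw [hre, hc, mul_comm R' (Real.cos δ), mul_div_assoc]
      calc Real.cos δ * (R' / P) ≤ Real.cos (Complex.arg (-(h v))) * ‖h v‖ := by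
            apply mul_le_mul hcos hlb (le_of_lt (div_pos hR' hPp))
              (le_trans hcosδ.le hcos)
        _ = ‖h v‖ * Real.cos (Complex.arg (-(h v))) := mul_comm _ _
    have : (h v).re ≤ -c / P := by
      have : (h v).re = -(-(h v)).re := by simp
      rw [this, neg_div]
      linarith
    rw [Complex.norm_exp]
    exact Real.exp_le_exp.mpr this
  refine ⟨main, fun N => ?_⟩
  set M : ℕ := ∑ i ∈ F, N i with hM
  refine ⟨(M.factorial : ℝ) / c ^ M, div_pos (Nat.cast_pos.mpr M.factorial_pos) (pow_pos hcpos M), ?_⟩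
  intro v hv hvle
  set P := ∏ i ∈ F, ‖v i‖ ^ m i with hP
  have hPp : 0 < P := hPpos v hv
  have key : Real.exp (-c / P) ≤ (M.factorial : ℝ) / c ^ M * P ^ M := by
    have hx : 0 < c / P := div_pos hcpos hPp
    have h1 : (c / P) ^ M / (M.factorial : ℝ) ≤ Real.exp (c / P) :=
      Real.pow_div_factorial_le_exp (c / P) hx.le M
    have h2 : 0 < (c / P) ^ M / (M.factorial : ℝ) :=
      div_pos (pow_pos hx M) (Nat.cast_pos.mpr M.factorial_pos)
    have h3 : Real.exp (-c / P) = (Real.exp (c / P))⁻¹ := by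
      rw [← Real.exp_neg, neg_div]
    rw [h3]
    calc (Real.exp (c / P))⁻¹ ≤ ((c / P) ^ M / (M.factorial : ℝ))⁻¹ :=
          inv_anti₀ h2 h1
      _ = (M.factorial : ℝ) / c ^ M * P ^ M := by
          field_simp
          rw [← mul_pow, div_mul_cancel₀ c hPp.ne']
  have hPle : ∀ j ∈ F, P ≤ ‖v j‖ := by
    intro j hj
    have hmj : 1 ≤ m j := hm j (by simpa [hF] using hj)
    have hfactor : ∀ i ∈ F, ‖v i‖ ^ m i ≤ 1 := fun i _ =>
      pow_le_one₀ (norm_nonneg _) (hvle i)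
    calc P = ‖v j‖ ^ m j * ∏ i ∈ F.erase j, ‖v i‖ ^ m i :=
          (Finset.mul_prod_erase F _ hj).symm
      _ ≤ ‖v j‖ ^ m j * 1 := by
          apply mul_le_mul_of_nonneg_left _ (pow_nonneg (norm_nonneg _) _)
          exact Finset.prod_le_one (fun i _ => pow_nonneg (norm_nonneg _) _)
            (fun i hi => hfactor i (Finset.mem_of_mem_erase hi))
      _ = ‖v j‖ ^ m j := mul_one _
      _ ≤ ‖v j‖ ^ 1 :=
          pow_le_pow_of_le_one (norm_nonneg _) (hvle j) hmj
      _ = ‖v j‖ := pow_one _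
  have hPM : P ^ M ≤ ∏ i ∈ F, ‖v i‖ ^ N i := by
    rw [hM, ← Finset.prod_pow_eq_pow_sum]
    exact Finset.prod_le_prod (fun i _ => pow_nonneg hPp.le _)
      (fun i hi => pow_le_pow_left₀ hPp.le (hPle i hi) _)
  calc ‖Complex.exp (h v)‖ ≤ Real.exp (-c / P) := main v hv
    _ ≤ (M.factorial : ℝ) / c ^ M * P ^ M := key
    _ ≤ (M.factorial : ℝ) / c ^ M * ∏ i ∈ F, ‖v i‖ ^ N i := by
        apply mul_le_mul_of_nonneg_left hPM
        exact le_of_lt (div_pos (Nat.cast_pos.mpr M.factorial_pos) (pow_pos hcpos M))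
end
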